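/- Let G be a 2-connected outerplane graph on n ≥ 3 vertices (the outer cycle plus pairwise non-crossing chords) with m edges. There exists a bijective edge labeling ℓ : E(G) → {1, …, m} with the following property: for every spanning tree T of G and every edge exchange {e, f} for T with ℓ(e) < ℓ(f), there is an edge d of G with ℓ(d) < ℓ(f) such that d and f share an end vertex or lie on a common face of G, exactly one of d, f belongs to T, and T △ {d, f} is again a spanning tree of G. -/

import Mathlib

/-- `T` is (the edge set of) a spanning tree of the simple graph `G`:
a set of edges of `G` forming a connected and acyclic spanning subgraph. -/
def IsSpanningTree {V : Type*} (G : SimpleGraph V) (T : Finset (Sym2 V)) : Prop :=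
  ↑T ⊆ G.edgeSet ∧ (SimpleGraph.fromEdgeSet (↑T : Set (Sym2 V))).Connected ∧
    (SimpleGraph.fromEdgeSet (↑T : Set (Sym2 V))).IsAcyclic

/-- Two chords `e = {a,b}` and `f = {c,d}` of the convex polygon with vertices
`0 < 1 < ⋯ < n-1` cross, witnessed by the interleaving pattern `a < c < b < d`. -/
def Crossing {n : ℕ} (e f : Sym2 (Fin n)) : Prop :=
  ∃ a b c d : Fin n, a < c ∧ c < b ∧ b < d ∧ e = s(a, b) ∧ f = s(c, d)

/-- A listing `L` of spanning trees (as edge sets) is genlex with respect to the edge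
labeling `ℓ`: for every `k` and every set `S` of edges, the set of positions `i` in the
listing whose tree restricted to the edges with label `> k` equals `S` is an interval
of consecutive integers. -/
def IsGenlex {V : Type*} [DecidableEq V] (ℓ : Sym2 V → ℕ) (L : List (Finset (Sym2 V))) :
    Prop :=
  ∀ (k : ℕ) (S : Finset (Sym2 V)) (i p j : ℕ)
    (hi : i < L.length) (hp : p < L.length) (hj : j < L.length),
    i ≤ p → p ≤ j →
    (L.get ⟨i, hi⟩).filter (fun e => k < ℓ e) = S →
    (L.get ⟨j, hj⟩).filter (fun e => k < ℓ e) = S →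
    (L.get ⟨p, hp⟩).filter (fun e => k < ℓ e) = S

/-- The increasing list of vertices `l = [a_1, …, a_k]` (with `k ≥ 3`) is an inner face
of the 2-connected outerplane graph `G`: consecutive vertices `a_i, a_{i+1}` as well as
the pair `a_1, a_k` are adjacent in `G`, and no other pair of vertices of `l` is
adjacent in `G`. -/
def IsInnerFace {n : ℕ} (G : SimpleGraph (Fin n)) (l : List (Fin n)) : Prop :=
  3 ≤ l.length ∧ l.Pairwise (· < ·) ∧ l.Chain' G.Adj ∧
  (∀ (h : 0 < l.length),
    G.Adj (l.get ⟨0, h⟩) (l.get ⟨l.length - 1, Nat.sub_lt h one_pos⟩)) ∧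
  (∀ (i j : ℕ) (hi : i < l.length) (hj : j < l.length),
    i + 1 < j → ¬(i = 0 ∧ j = l.length - 1) → ¬ G.Adj (l.get ⟨i, hi⟩) (l.get ⟨j, hj⟩))

/-- `e` is a boundary edge of the inner face given by the vertex list `l`: an edge
between two consecutive vertices of `l` or the closing edge between the first and the
last vertex of `l`. -/
def FaceBoundaryEdge {n : ℕ} (l : List (Fin n)) (e : Sym2 (Fin n)) : Prop :=
  (∃ (i : ℕ) (h : i + 1 < l.length),
    e = s(l.get ⟨i, Nat.lt_of_succ_lt h⟩, l.get ⟨i + 1, h⟩)) ∨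
  (∃ h : 0 < l.length, e = s(l.get ⟨0, h⟩, l.get ⟨l.length - 1, Nat.sub_lt h one_pos⟩))

/-- `e` is an outer-cycle edge `{i, (i+1) mod n}` of the convex polygon on `n` vertices. -/
def IsOuterEdge {n : ℕ} (e : Sym2 (Fin n)) : Prop :=
  ∃ u v : Fin n, (u.val + 1) % n = v.val ∧ e = s(u, v)

/-- Two edges `e, f` of the 2-connected outerplane graph `G` lie on a common face:
either both are boundary edges of a common inner face of `G`, or both are outer-cycle
edges (which bound the outer face). -/
def OnCommonFace {n : ℕ} (G : SimpleGraph (Fin n)) (e f : Sym2 (Fin n)) : Prop :=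
  (∃ l : List (Fin n), IsInnerFace G l ∧ FaceBoundaryEdge l e ∧ FaceBoundaryEdge l f) ∨
  (IsOuterEdge e ∧ IsOuterEdge f)


/-- `{e, f}` is an edge exchange for the spanning tree `T` of `G`: both are edges of
`G`, exactly one of them belongs to `T`, and `T △ {e, f}` is again a spanning tree. -/
def IsEdgeExchange {V : Type*} [DecidableEq V] (G : SimpleGraph V)
    (T : Finset (Sym2 V)) (e f : Sym2 V) : Prop :=
  e ∈ G.edgeSet ∧ f ∈ G.edgeSet ∧ e ≠ f ∧ (e ∈ T ↔ f ∉ T) ∧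
    IsSpanningTree G (symmDiff T {e, f})

open SimpleGraph

namespace OPOF

/-! ### key and basic Sym2 -/

def emax {n : ℕ} (e : Sym2 (Fin n)) : Fin n := Sym2.lift ⟨fun a b => max a b, fun _ _ => max_comm _ _⟩ e
def emin {n : ℕ} (e : Sym2 (Fin n)) : Fin n := Sym2.lift ⟨fun a b => min a b, fun _ _ => min_comm _ _⟩ e

def key (n : ℕ) (e : Sym2 (Fin n)) : ℕ := (emax e).val * n + (n - 1 - (emin e).val)

@[simp] lemma emax_mk {n : ℕ} (a b : Fin n) : emax s(a,b) = max a b := rfl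
@[simp] lemma emin_mk {n : ℕ} (a b : Fin n) : emin s(a,b) = min a b := rfl

lemma eq_mk_minmax {n : ℕ} (e : Sym2 (Fin n)) : e = s(emin e, emax e) := by
  induction e using Sym2.ind with
  | _ a b =>
    rcases le_total a b with h | h
    · simp [min_eq_left h, max_eq_right h]
    · rw [emin_mk, emax_mk, min_eq_right h, max_eq_left h]; exact Sym2.eq_swap

lemma key_mk {n : ℕ} {a b : Fin n} (h : a ≤ b) :
    key n s(a,b) = b.val * n + (n - 1 - a.val) := by
  simp [key, max_eq_right h, min_eq_left h]

lemma keyblock_lt {b1 r1 b2 r2 N : ℕ} (hr1 : r1 < N)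
    (h : b1 < b2 ∨ (b1 = b2 ∧ r1 < r2)) : b1*N + r1 < b2*N + r2 := by
  rcases h with h | ⟨rfl, h⟩
  · calc b1*N + r1 < b1*N + N := by omega
    _ = (b1+1)*N := by ring
    _ ≤ b2*N := Nat.mul_le_mul_right _ h
    _ ≤ b2*N + r2 := Nat.le_add_right _ _
  · omega

lemma keyblock_le {b1 r1 b2 r2 N : ℕ} (hr1 : r1 < N)
    (h : b1 < b2 ∨ (b1 = b2 ∧ r1 ≤ r2)) : b1*N + r1 ≤ b2*N + r2 := by
  rcases h with h | ⟨rfl, h⟩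
  · exact le_of_lt (keyblock_lt hr1 (Or.inl h))
  · omega

lemma key_inj {n : ℕ} {e e' : Sym2 (Fin n)} (h : key n e = key n e') : e = e' := by
  have h1 : (emax e).val < n := (emax e).isLt
  have h1' : (emax e').val < n := (emax e').isLt
  have h2 : n - 1 - (emin e).val < n := by omega
  have h2' : n - 1 - (emin e').val < n := by omega
  have hmax : (emax e).val = (emax e').val := by
    unfold key at h
    rcases Nat.lt_trichotomy (emax e).val (emax e').val with hh | hh | hh
    · exact absurd h (Nat.ne_of_lt (keyblock_lt h2 (Or.inl hh)))
    · exact hh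
    · exact absurd h.symm (Nat.ne_of_lt (keyblock_lt h2' (Or.inl hh)))
  have hminle : (emin e).val ≤ n - 1 := by omega
  have hminle' : (emin e').val ≤ n - 1 := by omega
  have hmin : (emin e).val = (emin e').val := by
    unfold key at h; rw [hmax] at h; omega
  have : emax e = emax e' := Fin.ext hmax
  have h5 : emin e = emin e' := Fin.ext hmin
  rw [eq_mk_minmax e, eq_mk_minmax e', this, h5]

variable {V : Type*}

lemma adj_reachable {K : SimpleGraph V} {a b : V} (h : K.Adj a b) : K.Reachable a b :=
  h.reachable

/-- Splice: any `H`-reachability transfers to `K` provided `K` contains all `H`-edges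
except possibly `s(a,b)`, and `a, b` are reachable in `K`. -/
lemma reach_splice (H K : SimpleGraph V) (a b : V)
    (hsub : ∀ u w, H.Adj u w → s(u,w) ≠ s(a,b) → K.Adj u w)
    (hab : K.Reachable a b) : ∀ {v w : V}, H.Reachable v w → K.Reachable v w := by
  intro v w ⟨p⟩
  induction p with
  | nil => exact Reachable.refl _
  | @cons u u' w h p ih =>
    by_cases he : s(u, u') = s(a, b)
    · rw [Sym2.eq_iff] at he
      rcases he with ⟨rfl, rfl⟩ | ⟨rfl, rfl⟩
      · exact hab.trans ih
      · exact hab.symm.trans ih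
    · exact ((hsub _ _ h he).reachable).trans ih

/-- Every vertex that reaches `x` in `H` reaches `x` or `y` in `H` minus the edge `s(x,y)`. -/
lemma reach_or (H : SimpleGraph V) (x y : V) {v : V} (h : H.Reachable v x) :
    (H \ fromEdgeSet {s(x,y)}).Reachable v x ∨ (H \ fromEdgeSet {s(x,y)}).Reachable v y := by
  suffices haux : ∀ {a t : V} (_ : H.Walk a t),
      (H \ fromEdgeSet {s(x,y)}).Reachable a t ∨
      (H \ fromEdgeSet {s(x,y)}).Reachable a x ∨ (H \ fromEdgeSet {s(x,y)}).Reachable a y by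
    obtain ⟨p⟩ := h
    rcases haux p with h1 | h1 | h1
    · exact Or.inl h1
    · exact Or.inl h1
    · exact Or.inr h1
  intro a t p
  induction p with
  | nil => exact Or.inl (Reachable.refl _)
  | @cons u u' t h p ih =>
    by_cases he : s(u, u') = s(x, y)
    · rw [Sym2.eq_iff] at he
      rcases he with ⟨rfl, rfl⟩ | ⟨rfl, rfl⟩
      · exact Or.inr (Or.inl (Reachable.refl _))
      · exact Or.inr (Or.inr (Reachable.refl _))
    · have hadj : (H \ fromEdgeSet {s(x,y)}).Adj u u' := by
        rw [sdiff_adj]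
        refine ⟨h, ?_⟩
        rw [fromEdgeSet_adj]
        rintro ⟨hmem, -⟩
        exact he (Set.mem_singleton_iff.mp hmem)
      rcases ih with h1 | h1 | h1
      · exact Or.inl (hadj.reachable.trans h1)
      · exact Or.inr (Or.inl (hadj.reachable.trans h1))
      · exact Or.inr (Or.inr (hadj.reachable.trans h1))

lemma symmDiff_eq_erase_union {α : Type*} [DecidableEq α] (T : Finset α) (d f : α)
    (hd : d ∈ T) (hf : f ∉ T) (hdf : d ≠ f) :
    symmDiff T {d, f} = T.erase d ∪ {f} := by
  ext a
  simp only [Finset.mem_symmDiff, Finset.mem_union, Finset.mem_erase, Finset.mem_insert,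
    Finset.mem_singleton]
  constructor
  · rintro (⟨haT, hna⟩ | ⟨(rfl | rfl), hnT⟩)
    · exact Or.inl ⟨fun hh => hna (Or.inl hh), haT⟩
    · exact absurd hd hnT
    · exact Or.inr rfl
  · rintro (⟨hne, haT⟩ | rfl)
    · exact Or.inl ⟨haT, by rintro (rfl | rfl); exact hne rfl; exact hf haT⟩
    · exact Or.inr ⟨Or.inr rfl, hf⟩

lemma not_end_mem_takeUntil [DecidableEq V] {H : SimpleGraph V} {a b : V} {p : H.Walk a b}
    (hp : p.support.Nodup) {z : V} (hz : z ∈ p.support) (hzb : z ≠ b) :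
    b ∉ (p.takeUntil z hz).support := by
  intro hb
  have hspec := p.take_spec hz
  have hsup : p.support = (p.takeUntil z hz).support ++ (p.dropUntil z hz).support.tail := by
    conv_lhs => rw [← hspec]
    exact Walk.support_append _ _
  rw [hsup] at hp
  have hdisj := List.disjoint_of_nodup_append hp
  apply hdisj hb
  have hbmem : b ∈ (p.dropUntil z hz).support := Walk.end_mem_support _
  have : (p.dropUntil z hz).support = z :: (p.dropUntil z hz).support.tail :=
    Walk.support_eq_cons _
  rw [this, List.mem_cons] at hbmem
  rcases hbmem with heq | h
  · exact absurd heq.symm hzb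
  · exact h

lemma not_start_mem_dropUntil [DecidableEq V] {H : SimpleGraph V} {a b : V} {p : H.Walk a b}
    (hp : p.support.Nodup) {z : V} (hz : z ∈ p.support) (hza : z ≠ a) :
    a ∉ (p.dropUntil z hz).support := by
  intro ha
  have hspec := p.take_spec hz
  have hsup : p.support = (p.takeUntil z hz).support ++ (p.dropUntil z hz).support.tail := by
    conv_lhs => rw [← hspec]
    exact Walk.support_append _ _
  rw [hsup] at hp
  have hdisj := List.disjoint_of_nodup_append hp
  have hamem : a ∈ (p.takeUntil z hz).support := Walk.start_mem_support _
  apply hdisj hamem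
  have : (p.dropUntil z hz).support = z :: (p.dropUntil z hz).support.tail :=
    Walk.support_eq_cons _
  rw [this, List.mem_cons] at ha
  rcases ha with heq | h
  · exact absurd heq.symm hza
  · exact h


/-! ### Spanning tree exchange lemmas -/

section Tree

variable {V : Type*} [DecidableEq V] (G : SimpleGraph V) (T : Finset (Sym2 V))

lemma mem_K_edgeSet {d f a : Sym2 V} (haT : a ∈ T) (had : a ≠ d) (hdiag : ¬ a.IsDiag) :
    a ∈ (fromEdgeSet (↑(T.erase d ∪ {f}) : Set (Sym2 V))).edgeSet := by
  rw [edgeSet_fromEdgeSet]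
  refine ⟨?_, hdiag⟩
  simp only [Finset.coe_union, Finset.coe_erase, Finset.coe_singleton, Set.mem_union,
    Set.mem_diff, Set.mem_singleton_iff, Finset.mem_coe]
  exact Or.inl ⟨haT, had⟩

lemma mem_coe_K {d f a : Sym2 V} :
    (a ∈ (↑(T.erase d ∪ {f}) : Set (Sym2 V))) ↔ (a ∈ T ∧ a ≠ d) ∨ a = f := by
  simp only [Finset.coe_union, Finset.coe_erase, Finset.coe_singleton, Set.mem_union,
    Set.mem_diff, Set.mem_singleton_iff, Finset.mem_coe, Finset.mem_erase]
  try tauto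

lemma sub_K (d f : Sym2 V) :
    (fromEdgeSet (↑T : Set (Sym2 V)) \ fromEdgeSet {d}) ≤
      fromEdgeSet (↑(T.erase d ∪ {f}) : Set (Sym2 V)) := by
  intro u w huw
  rw [sdiff_adj, fromEdgeSet_adj, fromEdgeSet_adj] at huw
  obtain ⟨⟨hmem, hnuw⟩, hnf⟩ := huw
  rw [fromEdgeSet_adj, mem_coe_K]
  exact ⟨Or.inl ⟨Finset.mem_coe.mp hmem, fun h => hnf ⟨Set.mem_singleton_iff.mpr h, hnuw⟩⟩, hnuw⟩

lemma K_minus_sub (d f : Sym2 V) (hfd : f ∉ T) :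
    (fromEdgeSet (↑(T.erase d ∪ {f}) : Set (Sym2 V)) \ fromEdgeSet {f}) ≤
      (fromEdgeSet (↑T : Set (Sym2 V)) \ fromEdgeSet {d}) := by
  intro u w huw
  rw [sdiff_adj, fromEdgeSet_adj, fromEdgeSet_adj, mem_coe_K] at huw
  obtain ⟨⟨hmem, hnuw⟩, hnf⟩ := huw
  have hnef : s(u,w) ≠ f := fun h => hnf ⟨Set.mem_singleton_iff.mpr h, hnuw⟩
  rcases hmem with ⟨haT, had⟩ | heq
  · rw [sdiff_adj, fromEdgeSet_adj, fromEdgeSet_adj]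
    exact ⟨⟨haT, hnuw⟩, fun hcon => had (Set.mem_singleton_iff.mp hcon.1)⟩
  · exact absurd heq hnef

lemma cyc_ex (hT : IsSpanningTree G T) {x y p : V}
    (hfG : s(x,y) ∈ G.edgeSet) (hfT : s(x,y) ∉ T)
    (hadj : (fromEdgeSet (↑T : Set (Sym2 V))).Adj x p)
    (P' : (fromEdgeSet (↑T : Set (Sym2 V))).Walk p y)
    (hP : (SimpleGraph.Walk.cons hadj P').IsPath) :
    IsSpanningTree G ((T.erase s(x,p)) ∪ {s(x,y)}) := by
  have hxy : x ≠ y := (G.mem_edgeSet.mp hfG).ne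
  have hxp : x ≠ p := hadj.ne
  have hxns : x ∉ P'.support := ((SimpleGraph.Walk.cons_isPath_iff hadj P').mp hP).2
  have hdP' : s(x,p) ∉ P'.edges := fun hmem => hxns (P'.fst_mem_support_of_mem_edges hmem)
  have hsubP' : ∀ e ∈ P'.edges,
      e ∈ (fromEdgeSet (↑(T.erase s(x,p) ∪ {s(x,y)}) : Set (Sym2 V))).edgeSet := by
    intro e he
    have heH : e ∈ (fromEdgeSet (↑T : Set (Sym2 V))).edgeSet := P'.edges_subset_edgeSet he
    rw [edgeSet_fromEdgeSet] at heH
    exact mem_K_edgeSet T (Finset.mem_coe.mp heH.1) (fun h => hdP' (h ▸ he)) heH.2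
  have hKxy : (fromEdgeSet (↑(T.erase s(x,p) ∪ {s(x,y)}) : Set (Sym2 V))).Adj x y := by
    rw [fromEdgeSet_adj, mem_coe_K]
    exact ⟨Or.inr rfl, hxy⟩
  have hKxp : (fromEdgeSet (↑(T.erase s(x,p) ∪ {s(x,y)}) : Set (Sym2 V))).Reachable x p :=
    hKxy.reachable.trans (Reachable.symm ⟨P'.transfer _ hsubP'⟩)
  refine ⟨?_, ?_, ?_⟩
  · intro a ha
    rw [mem_coe_K] at ha
    rcases ha with ⟨haT, -⟩ | rfl
    · exact hT.1 (Finset.mem_coe.mpr haT)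
    · exact hfG
  · haveI : Nonempty V := hT.2.1.nonempty
    refine ⟨fun u v => ?_⟩
    refine reach_splice (fromEdgeSet (↑T : Set (Sym2 V))) _ x p ?_ hKxp
      (hT.2.1.preconnected u v)
    intro u w huw hne
    rw [fromEdgeSet_adj] at huw
    rw [fromEdgeSet_adj, mem_coe_K]
    exact ⟨Or.inl ⟨Finset.mem_coe.mp huw.1, hne⟩, huw.2⟩
  · intro v c hc
    by_cases hfc : s(x,y) ∈ c.edges
    · obtain ⟨-, hreach⟩ :=
        (adj_and_reachable_delete_edges_iff_exists_cycle
          (G := fromEdgeSet (↑(T.erase s(x,p) ∪ {s(x,y)}) : Set (Sym2 V)))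
          (v := x) (w := y)).2 ⟨v, c, hc, hfc⟩
      have hry : ((fromEdgeSet (↑T : Set (Sym2 V))) \ fromEdgeSet {s(x,p)}).Reachable y p := by
        refine Reachable.symm ⟨P'.transfer _ ?_⟩
        intro e he
        rw [edgeSet_sdiff]
        refine ⟨P'.edges_subset_edgeSet he, ?_⟩
        rw [edgeSet_fromEdgeSet]
        rintro ⟨hmem, -⟩
        exact hdP' ((Set.mem_singleton_iff.mp hmem) ▸ he)
      have hb := (isAcyclic_iff_forall_adj_isBridge.mp hT.2.2) hadj
      rw [isBridge_iff] at hb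
      exact hb ((hreach.mono (K_minus_sub T s(x,p) s(x,y) hfT)).trans hry)
    · have hcond : ∀ e ∈ c.edges, e ∈ (fromEdgeSet (↑T : Set (Sym2 V))).edgeSet := by
        intro e he
        have heK := c.edges_subset_edgeSet he
        rw [edgeSet_fromEdgeSet] at heK
        obtain ⟨hmem, hdiag⟩ := heK
        rw [mem_coe_K] at hmem
        rw [edgeSet_fromEdgeSet]
        rcases hmem with ⟨haT, -⟩ | rfl
        · exact ⟨haT, hdiag⟩
        · exact absurd he hfc
      exact hT.2.2 (c.transfer _ hcond) (hc.transfer hcond)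

lemma mem_path_edges (hT : IsSpanningTree G T) {x y : V}
    (hfG : s(x,y) ∈ G.edgeSet) (hfT : s(x,y) ∉ T) {e : Sym2 V} (heT : e ∈ T)
    (hsp : IsSpanningTree G (T.erase e ∪ {s(x,y)}))
    (P : (fromEdgeSet (↑T : Set (Sym2 V))).Walk x y) : e ∈ P.edges := by
  by_contra hne
  have hxy : x ≠ y := (G.mem_edgeSet.mp hfG).ne
  have hsub : ∀ g ∈ P.edges,
      g ∈ (fromEdgeSet (↑(T.erase e ∪ {s(x,y)}) : Set (Sym2 V))).edgeSet := by
    intro g hg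
    have hgH := P.edges_subset_edgeSet hg
    rw [edgeSet_fromEdgeSet] at hgH
    exact mem_K_edgeSet T (Finset.mem_coe.mp hgH.1) (fun h => hne (h ▸ hg)) hgH.2
  have hyx : (fromEdgeSet (↑(T.erase e ∪ {s(x,y)}) : Set (Sym2 V))).Adj y x := by
    rw [fromEdgeSet_adj, mem_coe_K, Sym2.eq_swap]
    exact ⟨Or.inr rfl, hxy.symm⟩
  have hnotin : s(y,x) ∉ (↑(P.transfer _ hsub).toPath :
      (fromEdgeSet (↑(T.erase e ∪ {s(x,y)}) : Set (Sym2 V))).Walk x y).edges := by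
    intro hmem
    have h1 : s(y,x) ∈ (P.transfer _ hsub).edges := (Walk.edges_toPath_subset _) hmem
    rw [Walk.edges_transfer] at h1
    have h2 := P.edges_subset_edgeSet h1
    rw [edgeSet_fromEdgeSet] at h2
    have h3 := h2.1
    rw [Sym2.eq_swap] at h3
    exact hfT (Finset.mem_coe.mp h3)
  exact hsp.2.2 _ (SimpleGraph.Path.cons_isCycle (P.transfer _ hsub).toPath hyx hnotin)

lemma not_reach_xy (hT : IsSpanningTree G T) {x y : V} (hfT : s(x,y) ∈ T) (hxy : x ≠ y) :
    ¬ ((fromEdgeSet (↑T : Set (Sym2 V)) \ fromEdgeSet {s(x,y)}).Reachable x y) := by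
  have hadj : (fromEdgeSet (↑T : Set (Sym2 V))).Adj x y := by
    rw [fromEdgeSet_adj]; exact ⟨Finset.mem_coe.mpr hfT, hxy⟩
  have hb := (isAcyclic_iff_forall_adj_isBridge.mp hT.2.2) hadj
  rw [isBridge_iff] at hb
  exact hb

lemma cut_ex (hT : IsSpanningTree G T) {x y c c' : V}
    (hfT : s(x,y) ∈ T) (hxy : x ≠ y)
    (hcG : s(c,c') ∈ G.edgeSet) (hne : s(c,c') ≠ s(x,y))
    (hc : (fromEdgeSet (↑T : Set (Sym2 V)) \ fromEdgeSet {s(x,y)}).Reachable x c)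
    (hc' : ¬ (fromEdgeSet (↑T : Set (Sym2 V)) \ fromEdgeSet {s(x,y)}).Reachable x c') :
    s(c,c') ∉ T ∧ IsSpanningTree G ((T.erase s(x,y)) ∪ {s(c,c')}) := by
  have hcc' : c ≠ c' := (G.mem_edgeSet.mp hcG).ne
  have hdT : s(c,c') ∉ T := by
    intro hmem
    apply hc'
    refine hc.trans ?_
    have hstep : (fromEdgeSet (↑T : Set (Sym2 V)) \ fromEdgeSet {s(x,y)}).Adj c c' := by
      rw [sdiff_adj, fromEdgeSet_adj, fromEdgeSet_adj]
      exact ⟨⟨Finset.mem_coe.mpr hmem, hcc'⟩, fun hcon =>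
        hne (Set.mem_singleton_iff.mp hcon.1)⟩
    exact hstep.reachable
  have hKcc' : (fromEdgeSet (↑(T.erase s(x,y) ∪ {s(c,c')}) : Set (Sym2 V))).Adj c c' := by
    rw [fromEdgeSet_adj, mem_coe_K]
    exact ⟨Or.inr rfl, hcc'⟩
  have hKxy : (fromEdgeSet (↑(T.erase s(x,y) ∪ {s(c,c')}) : Set (Sym2 V))).Reachable x y := by
    have h1 := hc.mono (sub_K T s(x,y) s(c,c'))
    have h3 := reach_or (fromEdgeSet (↑T : Set (Sym2 V))) x y (hT.2.1.preconnected c' x)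
    rcases h3 with h3 | h3
    · exact absurd (h3.symm) hc'
    · exact (h1.trans hKcc'.reachable).trans (h3.mono (sub_K T s(x,y) s(c,c')))
  refine ⟨hdT, ?_, ?_, ?_⟩
  · intro a ha
    rw [mem_coe_K] at ha
    rcases ha with ⟨haT, -⟩ | rfl
    · exact hT.1 (Finset.mem_coe.mpr haT)
    · exact hcG
  · haveI : Nonempty V := hT.2.1.nonempty
    refine ⟨fun u v => ?_⟩
    refine reach_splice (fromEdgeSet (↑T : Set (Sym2 V))) _ x y ?_ hKxy
      (hT.2.1.preconnected u v)
    intro u w huw hne'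
    refine sub_K T s(x,y) s(c,c') ?_
    rw [sdiff_adj]
    refine ⟨huw, ?_⟩
    rw [fromEdgeSet_adj]
    rintro ⟨hmem, -⟩
    exact hne' (Set.mem_singleton_iff.mp hmem)
  · intro v c0 hc0
    by_cases hdc : s(c,c') ∈ c0.edges
    · obtain ⟨-, hreach⟩ :=
        (adj_and_reachable_delete_edges_iff_exists_cycle
          (G := fromEdgeSet (↑(T.erase s(x,y) ∪ {s(c,c')}) : Set (Sym2 V)))
          (v := c) (w := c')).2 ⟨v, c0, hc0, hdc⟩
      exact hc' (hc.trans (hreach.mono (K_minus_sub T s(x,y) s(c,c') hdT)))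
    · have hcond : ∀ e ∈ c0.edges, e ∈ (fromEdgeSet (↑T : Set (Sym2 V))).edgeSet := by
        intro e he
        have heK := c0.edges_subset_edgeSet he
        rw [edgeSet_fromEdgeSet] at heK
        obtain ⟨hmem, hdiag⟩ := heK
        rw [mem_coe_K] at hmem
        rw [edgeSet_fromEdgeSet]
        rcases hmem with ⟨haT, -⟩ | rfl
        · exact ⟨haT, hdiag⟩
        · exact absurd he hdc
      exact hT.2.2 (c0.transfer _ hcond) (hc0.transfer hcond)

lemma cut_sides (hT : IsSpanningTree G T) {x y u w : V}
    (hfT : s(x,y) ∈ T) (hxy : x ≠ y)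
    (heG : s(u,w) ∈ G.edgeSet) (heT : s(u,w) ∉ T)
    (hsp : IsSpanningTree G ((T.erase s(x,y)) ∪ {s(u,w)})) :
    ((fromEdgeSet (↑T : Set (Sym2 V)) \ fromEdgeSet {s(x,y)}).Reachable x u ↔
      ¬ (fromEdgeSet (↑T : Set (Sym2 V)) \ fromEdgeSet {s(x,y)}).Reachable x w) := by
  have huw : u ≠ w := (G.mem_edgeSet.mp heG).ne
  have hKuw : (fromEdgeSet (↑(T.erase s(x,y) ∪ {s(u,w)}) : Set (Sym2 V))).Adj u w := by
    rw [fromEdgeSet_adj, mem_coe_K]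
    exact ⟨Or.inr rfl, huw⟩
  have hbr := (isAcyclic_iff_forall_adj_isBridge.mp hsp.2.2) hKuw
  rw [isBridge_iff] at hbr
  have hnr : ¬ (fromEdgeSet (↑T : Set (Sym2 V)) \ fromEdgeSet {s(x,y)}).Reachable u w := by
    intro hr
    apply hbr
    refine hr.mono ?_
    intro a b hab
    rw [sdiff_adj, fromEdgeSet_adj, fromEdgeSet_adj] at hab
    obtain ⟨⟨hmem, hnab⟩, hnf⟩ := hab
    rw [deleteEdges]
    rw [sdiff_adj, fromEdgeSet_adj, fromEdgeSet_adj, mem_coe_K]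
    constructor
    · exact ⟨Or.inl ⟨Finset.mem_coe.mp hmem, fun h => hnf ⟨Set.mem_singleton_iff.mpr h, hnab⟩⟩, hnab⟩
    · rintro ⟨hcon, -⟩
      rw [Set.mem_singleton_iff] at hcon
      exact heT (hcon ▸ (Finset.mem_coe.mp hmem))
  constructor
  · intro hu hw
    exact hnr (hu.symm.trans hw)
  · intro hw
    rcases reach_or (fromEdgeSet (↑T : Set (Sym2 V))) x y (hT.2.1.preconnected u x)
        with h1 | h1
    · exact h1.symm
    · exfalso
      rcases reach_or (fromEdgeSet (↑T : Set (Sym2 V))) x y (hT.2.1.preconnected w x)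
          with h2 | h2
      · exact hw h2.symm
      · exact hnr (h1.trans h2.symm)

end Tree

/-! ### Crossing arguments -/

lemma nat_ivt {Q : ℕ → Prop} {a b : ℕ} (hab : a ≤ b) (ha : Q a) (hb : ¬ Q b) :
    ∃ c, a ≤ c ∧ c < b ∧ Q c ∧ ¬ Q (c+1) := by
  by_contra hcon
  push_neg at hcon
  have hstep : ∀ k, a + k ≤ b → Q (a + k) := by
    intro k
    induction k with
    | zero => intro _; simpa using ha
    | succ k ih =>
      intro hk
      have h1 : a + k ≤ b := by omega
      have h2 := ih h1
      have h3 : a + k < b := by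
        rcases Nat.lt_or_ge (a+k) b with h | h
        · exact h
        · exfalso
          have he : a + k = b := by omega
          exact hb (he ▸ h2)
      have h4 := hcon (a+k) (by omega) h3 h2
      have he : a + (k+1) = (a+k)+1 := by omega
      rw [he]
      exact h4
  have := hstep (b - a) (by omega)
  rw [show a + (b - a) = b by omega] at this
  exact hb this

section Cross

variable {n : ℕ} {G : SimpleGraph (Fin n)}

lemma no_enter (hnc : ∀ e ∈ G.edgeSet, ∀ f ∈ G.edgeSet, ¬ Crossing e f)
    {H : SimpleGraph (Fin n)} (hHG : H ≤ G)
    {a b : Fin n} (hab : a < b) (habG : s(a,b) ∈ G.edgeSet) :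
    ∀ {v w : Fin n} (W : H.Walk v w), (∀ z ∈ W.support, z ≠ a ∧ z ≠ b) →
      (v < a ∨ b < v) → ¬(a < w ∧ w < b) := by
  intro v w W
  induction W with
  | nil =>
    intro hsup hv hw
    rcases hv with hv | hv
    · exact absurd hw.1 (lt_asymm hv)
    · exact absurd hv (lt_asymm hw.2)
  | @cons u u' t h p ih =>
    intro hsup hv hw
    have hu' : u' ≠ a ∧ u' ≠ b := hsup u' (by
      rw [Walk.support_cons]
      exact List.mem_cons_of_mem _ p.start_mem_support)
    have hG : s(u,u') ∈ G.edgeSet := hHG h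
    rcases lt_trichotomy u' a with h1 | h1 | h1
    · exact ih (fun z hz => hsup z (by rw [Walk.support_cons]; exact List.mem_cons_of_mem _ hz))
        (Or.inl h1) hw
    · exact absurd h1 hu'.1
    · rcases lt_trichotomy u' b with h2 | h2 | h2
      · -- a < u' < b : the edge s(u,u') crosses s(a,b)
        exfalso
        rcases hv with hv | hv
        · exact hnc s(u,u') hG s(a,b) habG ⟨u, u', a, b, hv, h1, h2, rfl, rfl⟩
        · exact hnc s(a,b) habG s(u,u') hG ⟨a, b, u', u, h1, h2, hv, rfl, Sym2.eq_swap⟩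
      · exact absurd h2 hu'.2
      · exact ih (fun z hz => hsup z (by rw [Walk.support_cons]; exact List.mem_cons_of_mem _ hz))
          (Or.inr h2) hw

end Cross


/-! ### The labeling -/

lemma label_exists {n : ℕ} (G : SimpleGraph (Fin n)) (m : ℕ) (hm : G.edgeSet.ncard = m) :
    ∃ ℓ : Sym2 (Fin n) → ℕ, Set.BijOn ℓ G.edgeSet (Set.Icc 1 m) ∧
      ∀ e f : Sym2 (Fin n), e ∈ G.edgeSet → f ∈ G.edgeSet →
        (ℓ e < ℓ f ↔ key n e < key n f) := by
  classical
  have hfin : G.edgeSet.Finite := Set.toFinite _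
  set E : Finset (Sym2 (Fin n)) := hfin.toFinset with hE
  have hmemE : ∀ a, a ∈ E ↔ a ∈ G.edgeSet := fun a => hfin.mem_toFinset
  have hEm : E.card = m := by rw [← hm, Set.ncard_eq_toFinset_card]
  set ℓ : Sym2 (Fin n) → ℕ := fun e => (E.filter (fun e' => key n e' ≤ key n e)).card with hℓ
  have hmono : ∀ {e f}, f ∈ E → key n e < key n f → ℓ e < ℓ f := by
    intro e f hf hkey
    apply Finset.card_lt_card
    have hsub : E.filter (fun e' => key n e' ≤ key n e) ⊆
        E.filter (fun e' => key n e' ≤ key n f) := by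
      intro x hx
      rw [Finset.mem_filter] at hx ⊢
      exact ⟨hx.1, le_trans hx.2 (le_of_lt hkey)⟩
    rw [Finset.ssubset_iff_of_subset hsub]
    exact ⟨f, Finset.mem_filter.mpr ⟨hf, le_refl _⟩,
      fun hcon => absurd ((Finset.mem_filter.mp hcon).2) (not_le.mpr hkey)⟩
  have hiff : ∀ e f : Sym2 (Fin n), e ∈ G.edgeSet → f ∈ G.edgeSet →
      (ℓ e < ℓ f ↔ key n e < key n f) := by
    intro e f he hf
    constructor
    · intro hlf
      rcases lt_trichotomy (key n e) (key n f) with h | h | h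
      · exact h
      · exact absurd (key_inj h ▸ hlf) (lt_irrefl _)
      · exact absurd (hmono ((hmemE e).mpr he) h) (not_lt.mpr (le_of_lt hlf))
    · exact fun h => hmono ((hmemE f).mpr hf) h
  have hmaps : ∀ e ∈ G.edgeSet, ℓ e ∈ Set.Icc 1 m := by
    intro e he
    constructor
    · refine Finset.card_pos.mpr ⟨e, Finset.mem_filter.mpr ⟨(hmemE e).mpr he, le_refl _⟩⟩
    · rw [← hEm]
      exact Finset.card_le_card (Finset.filter_subset _ _)
  have hinj : Set.InjOn ℓ G.edgeSet := by
    intro e he f hf hef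
    rcases lt_trichotomy (key n e) (key n f) with h | h | h
    · exact absurd (hef ▸ hmono ((hmemE f).mpr hf) h) (lt_irrefl _)
    · exact key_inj h
    · exact absurd (hef ▸ hmono ((hmemE e).mpr he) h) (lt_irrefl _)
  have himg : E.image ℓ = Finset.Icc 1 m := by
    apply Finset.eq_of_subset_of_card_le
    · intro j hj
      obtain ⟨e, he, rfl⟩ := Finset.mem_image.mp hj
      have := hmaps e ((hmemE e).mp he)
      rw [Finset.mem_Icc]
      exact ⟨this.1, this.2⟩
    · rw [Nat.card_Icc, Finset.card_image_of_injOn (fun a ha b hb =>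
        hinj ((hmemE a).mp ha) ((hmemE b).mp hb)), hEm]
      omega
  refine ⟨ℓ, ⟨hmaps, hinj, ?_⟩, hiff⟩
  intro j hj
  have hj' : j ∈ Finset.Icc 1 m := Finset.mem_Icc.mpr ⟨hj.1, hj.2⟩
  rw [← himg] at hj'
  obtain ⟨e, he, hej⟩ := Finset.mem_image.mp hj'
  exact ⟨e, (hmemE e).mp he, hej⟩


/-! ### The inner face construction -/

lemma face_main {n : ℕ} {G : SimpleGraph (Fin n)}
    (hout : ∀ u v : Fin n, (u.val + 1) % n = v.val → G.Adj u v)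
    {x y : Fin n} (hxy2 : x.val + 1 < y.val) (hfG : G.Adj x y)
    (A : Set (Fin n)) (hxA : x ∈ A) (hyA : y ∉ A) :
    ∃ (c c' : Fin n) (l : List (Fin n)), c ∈ A ∧ c' ∉ A ∧ G.Adj c c' ∧
      IsInnerFace G l ∧ FaceBoundaryEdge l s(c,c') ∧ FaceBoundaryEdge l s(x,y) ∧
      key n s(c,c') < key n s(x,y) := by
  classical
  have hyn : y.val < n := y.isLt
  have hxyv : x.val < y.val := by omega
  have hxy : x < y := by rwa [Fin.lt_def]
  have hsucc : ∀ (v : Fin n) (hvn : v.val + 1 < n), G.Adj v ⟨v.val+1, hvn⟩ := by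
    intro v hvn
    apply hout
    exact Nat.mod_eq_of_lt hvn
  -- first step from x, staying strictly below y
  set S' : Finset (Fin n) := Finset.univ.filter (fun w => G.Adj x w ∧ x < w ∧ w < y) with hS'
  have hS'ne : S'.Nonempty := by
    refine ⟨⟨x.val+1, by omega⟩, ?_⟩
    refine Finset.mem_filter.mpr ⟨Finset.mem_univ _, hsucc x (by omega), ?_, ?_⟩
    · rw [Fin.lt_def]; simp
    · rw [Fin.lt_def]; exact hxy2
  set z1 : Fin n := S'.max' hS'ne with hz1def
  have hz1 : G.Adj x z1 ∧ x < z1 ∧ z1 < y := (Finset.mem_filter.mp (S'.max'_mem hS'ne)).2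
  have hz1max : ∀ w, G.Adj x w → x < w → w < y → w ≤ z1 := by
    intro w h1 h2 h3
    exact S'.le_max' _ (Finset.mem_filter.mpr ⟨Finset.mem_univ _, h1, h2, h3⟩)
  -- subsequent steps, allowed to hit y
  set Sg : Fin n → Finset (Fin n) :=
    fun v => Finset.univ.filter (fun w => G.Adj v w ∧ v < w ∧ w ≤ y) with hSg
  set g : Fin n → Fin n :=
    fun v => if h : (Sg v).Nonempty then (Sg v).max' h else v with hgdef
  have hSgne : ∀ v : Fin n, v < y → (Sg v).Nonempty := by
    intro v hv
    have hvn : v.val + 1 < n := by rw [Fin.lt_def] at hv; omega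
    refine ⟨⟨v.val+1, hvn⟩, Finset.mem_filter.mpr ⟨Finset.mem_univ _, hsucc v hvn, ?_, ?_⟩⟩
    · rw [Fin.lt_def]; simp
    · rw [Fin.le_def]
      rw [Fin.lt_def] at hv
      exact hv
  have hg : ∀ v : Fin n, v < y → (G.Adj v (g v) ∧ v < g v ∧ g v ≤ y) := by
    intro v hv
    have hne : (Sg v).Nonempty := hSgne v hv
    have hgv : g v = (Sg v).max' hne := dif_pos hne
    rw [hgv]
    exact (Finset.mem_filter.mp ((Sg v).max'_mem hne)).2
  have hgmax : ∀ v w : Fin n, v < y → G.Adj v w → v < w → w ≤ y → w ≤ g v := by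
    intro v w hv h1 h2 h3
    have hne : (Sg v).Nonempty := hSgne v hv
    have hgv : g v = (Sg v).max' hne := dif_pos hne
    rw [hgv]
    exact (Sg v).le_max' _ (Finset.mem_filter.mpr ⟨Finset.mem_univ _, h1, h2, h3⟩)
  -- the greedy chain
  set F : ℕ → Fin n := fun k =>
    Nat.rec (motive := fun _ => Fin n) z1 (fun _ acc => if acc = y then y else g acc) k with hFdef
  have hF0 : F 0 = z1 := rfl
  have hFsucc : ∀ k, F (k+1) = if F k = y then y else g (F k) := fun k => rfl
  have hFy : ∀ k, F k ≤ y := by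
    intro k
    induction k with
    | zero => exact le_of_lt hz1.2.2
    | succ k ih =>
      rw [hFsucc k]
      by_cases h : F k = y
      · rw [if_pos h]
      · rw [if_neg h]
        exact (hg (F k) (lt_of_le_of_ne ih h)).2.2
  have hFlt : ∀ k, F k < y → F (k+1) = g (F k) := by
    intro k h
    rw [hFsucc k, if_neg (ne_of_lt h)]
  have hFstep : ∀ k, F k < y → F k < F (k+1) := by
    intro k h
    rw [hFlt k h]
    exact (hg (F k) h).2.1
  have hFadj : ∀ k, F k < y → G.Adj (F k) (F (k+1)) := by
    intro k h
    rw [hFlt k h]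
    exact (hg (F k) h).1
  have hxF : ∀ k, x < F k := by
    intro k
    induction k with
    | zero => exact hz1.2.1
    | succ k ih =>
      rw [hFsucc k]
      by_cases h : F k = y
      · rw [if_pos h]; exact hxy
      · rw [if_neg h]
        exact lt_trans ih (hg (F k) (lt_of_le_of_ne (hFy k) h)).2.1
  have hFgrow : ∀ k, F k = y ∨ z1.val + k ≤ (F k).val := by
    intro k
    induction k with
    | zero => exact Or.inr (by omega)
    | succ k ih =>
      by_cases h : F k = y
      · left; rw [hFsucc k, if_pos h]
      · rcases ih with ih | ih
        · exact absurd ih h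
        · have hlt : F k < y := lt_of_le_of_ne (hFy k) h
          have := hFstep k hlt
          rw [Fin.lt_def] at this
          exact Or.inr (by omega)
  have hexists : ∃ k, F k = y := by
    rcases hFgrow n with h | h
    · exact ⟨n, h⟩
    · exact absurd h (by have := (F n).isLt; omega)
  set r : ℕ := Nat.find hexists with hrdef
  have hFr : F r = y := Nat.find_spec hexists
  have hFne : ∀ k, k < r → F k ≠ y := fun k hk => Nat.find_min hexists hk
  have hFlty : ∀ k, k < r → F k < y := fun k hk => lt_of_le_of_ne (hFy k) (hFne k hk)
  have hr1 : 1 ≤ r := by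
    rcases Nat.eq_zero_or_pos r with h | h
    · exfalso
      have := hFr
      rw [h, hF0] at this
      exact absurd this (ne_of_lt hz1.2.2)
    · exact h
  have hFmono : ∀ j, j ≤ r → ∀ i, i < j → F i < F j := by
    intro j
    induction j with
    | zero => intro _ i hi; omega
    | succ j ih =>
      intro hj i hi
      have hstep := hFstep j (hFlty j (by omega))
      rcases Nat.lt_or_ge i j with h | h
      · exact lt_trans (ih (by omega) i h) hstep
      · have : i = j := by omega
        rw [this]
        exact hstep
  -- the vertex sequence of the face
  set v : ℕ → Fin n := fun k => Nat.casesOn k x (fun k' => F k') with hvdef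
  have hv0 : v 0 = x := rfl
  have hvs : ∀ k, v (k+1) = F k := fun k => rfl
  have hvmono : ∀ i j, i < j → j ≤ r + 1 → v i < v j := by
    intro i j hij hjr
    obtain ⟨j', rfl⟩ : ∃ j', j = j' + 1 := ⟨j - 1, by omega⟩
    cases i with
    | zero => exact hxF j'
    | succ i' => exact hFmono j' (by omega) i' (by omega)
  have hvadj : ∀ k, k ≤ r → G.Adj (v k) (v (k+1)) := by
    intro k hk
    cases k with
    | zero => exact hz1.1
    | succ k' => exact hFadj k' (hFlty k' (by omega))
  have hvy : ∀ k, k ≤ r + 1 → v k ≤ y := by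
    intro k hk
    cases k with
    | zero => exact le_of_lt hxy
    | succ k' => exact hFy k'
  have hvry : v (r+1) = y := hFr
  -- the face as a list
  set l : List (Fin n) := x :: (List.range (r+1)).map F with hldef
  have hlen : l.length = r + 2 := by
    rw [hldef]
    simp
  have hget : ∀ (i : ℕ) (h : i < l.length), l.get ⟨i, h⟩ = v i := by
    intro i h
    cases i with
    | zero => rfl
    | succ i' =>
      show l.get ⟨i'+1, h⟩ = F i'
      simp only [hldef, List.get_eq_getElem, List.getElem_cons_succ, List.getElem_map,
        List.getElem_range]
  have hface : IsInnerFace G l := by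
    refine ⟨by omega, ?_, ?_, ?_, ?_⟩
    · rw [List.pairwise_iff_get]
      intro i j hij
      rw [hget i.val i.isLt, hget j.val j.isLt]
      exact hvmono i.val j.val hij (by have := j.isLt; omega)
    · show List.IsChain G.Adj l
      rw [List.isChain_iff_getElem]
      intro i hi
      show G.Adj (l.get ⟨i, by omega⟩) (l.get ⟨i+1, hi⟩)
      rw [hget i (by omega), hget (i+1) (by omega)]
      exact hvadj i (by omega)
    · intro h
      rw [hget 0 h, hget (l.length - 1) (Nat.sub_lt h one_pos)]
      rw [hlen]
      show G.Adj (v 0) (v (r+1))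
      rw [hv0, hvry]
      exact hfG
    · intro i j hi hj hij hnot
      rw [hget i hi, hget j hj]
      intro hadj
      obtain ⟨j', rfl⟩ : ∃ j', j = j' + 1 := ⟨j - 1, by omega⟩
      rw [hlen] at hj hnot
      cases i with
      | zero =>
        have hj'r : j' < r := by omega
        have hadj0 : G.Adj x (F j') := hadj
        have h1 := hz1max (F j') hadj0 (hxF j') (hFlty j' hj'r)
        have h2 : F 0 < F j' := hFmono j' (by omega) 0 (by omega)
        rw [hF0] at h2
        exact absurd h1 (not_le.mpr h2)
      | succ i' =>
        have hadj1 : G.Adj (F i') (F j') := hadj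
        have hi'r : i' < r := by omega
        have hj'r : j' ≤ r := by omega
        have h1 := hgmax (F i') (F j') (hFlty i' hi'r) hadj1
          (hFmono j' hj'r i' (by omega)) (hFy j')
        rw [← hFlt i' (hFlty i' hi'r)] at h1
        have h2 : F (i'+1) < F j' := hFmono j' hj'r (i'+1) (by omega)
        exact absurd h1 (not_le.mpr h2)
  -- the boundary switch edge
  obtain ⟨k, -, hkr, hkA, hkA'⟩ :=
    nat_ivt (Q := fun k => v k ∈ A) (a := 0) (b := r+1) (by omega)
      (by exact hxA)
      (by intro hcon; change v (r+1) ∈ A at hcon; rw [hvry] at hcon; exact hyA hcon)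
  have hkr' : k ≤ r := by omega
  refine ⟨v k, v (k+1), l, hkA, hkA', hvadj k hkr', hface, ?_, ?_, ?_⟩
  · left
    refine ⟨k, by omega, ?_⟩
    rw [hget k (by omega), hget (k+1) (by omega)]
  · right
    refine ⟨by omega, ?_⟩
    rw [hget 0 (by omega), hget (l.length - 1) (Nat.sub_lt (by omega) one_pos)]
    rw [hlen]
    show s(x,y) = s(v 0, v (r+1))
    rw [hv0, hvry]
  · have hkk1 : v k < v (k+1) := hvmono k (k+1) (by omega) (by omega)
    rw [key_mk (le_of_lt hkk1), key_mk (le_of_lt hxy)]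
    have hb1 : (v (k+1)).val < n := (v (k+1)).isLt
    have hb2 : n - 1 - (v k).val < n := by omega
    rcases lt_or_eq_of_le (hvy (k+1) (by omega)) with h | h
    · exact keyblock_lt hb2 (Or.inl (by rw [Fin.lt_def] at h; exact h))
    · have hk1 : k + 1 = r + 1 := by
        by_contra hcon
        have : v (k+1) < v (r+1) := hvmono (k+1) (r+1) (by omega) (by omega)
        rw [hvry] at this
        exact absurd h (ne_of_lt this)
      have hkx : x < v k := by
        have : k = r := by omega
        rw [this]
        obtain ⟨r', hr'⟩ : ∃ r', r = r' + 1 := ⟨r - 1, by omega⟩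
        rw [hr', hvs]
        exact hxF r'
      refine keyblock_lt hb2 (Or.inr ⟨by rw [h], ?_⟩)
      rw [Fin.lt_def] at hkx
      have := (v k).isLt
      omega


lemma emin_le_emax {n : ℕ} (e : Sym2 (Fin n)) : emin e ≤ emax e := by
  induction e using Sym2.ind with
  | _ a b => exact min_le_max

lemma symmDiff_eq_erase_union' {α : Type*} [DecidableEq α] (T : Finset α) (d f : α)
    (hd : d ∉ T) (hf : f ∈ T) (hdf : d ≠ f) :
    symmDiff T {d, f} = T.erase f ∪ {d} := by
  rw [Finset.pair_comm]
  exact symmDiff_eq_erase_union T f d hf hd (Ne.symm hdf)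


end OPOF


open OPOF

/-- For any 2-connected outerplane graph `G` on `n ≥ 3` vertices (the outer cycle plus
pairwise non-crossing chords) with `m` edges there is a bijective edge labeling
`ℓ : E(G) → {1, …, m}` such that for every spanning tree `T` of `G` and every edge
exchange `{e, f}` for `T` with `ℓ e < ℓ f`, there is an edge `d` of `G` with
`ℓ d < ℓ f` such that `d` and `f` share an end vertex or lie on a common face of `G`,
and `{d, f}` is an edge exchange for `T`. -/
theorem outerplane_pof_alternative (n m : ℕ) (hn : 3 ≤ n)
    (G : SimpleGraph (Fin n))
    (hout : ∀ u v : Fin n, (u.val + 1) % n = v.val → G.Adj u v)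
    (hnc : ∀ e ∈ G.edgeSet, ∀ f ∈ G.edgeSet, ¬ Crossing e f)
    (hm : G.edgeSet.ncard = m) :
    ∃ ℓ : Sym2 (Fin n) → ℕ, Set.BijOn ℓ G.edgeSet (Set.Icc 1 m) ∧
      ∀ T : Finset (Sym2 (Fin n)), IsSpanningTree G T →
        ∀ e f : Sym2 (Fin n), IsEdgeExchange G T e f → ℓ e < ℓ f →
          ∃ d : Sym2 (Fin n), ℓ d < ℓ f ∧
            ((∃ v : Fin n, v ∈ d ∧ v ∈ f) ∨ OnCommonFace G d f) ∧
            IsEdgeExchange G T d f := by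
  classical
  obtain ⟨ℓ, hbij, hiff⟩ := label_exists G m hm
  refine ⟨ℓ, hbij, ?_⟩
  intro T hT e f hex hlef
  obtain ⟨heG, hfG, hef, hmemiff, hsp⟩ := hex
  have hkeyef : key n e < key n f := (hiff e f heG hfG).mp hlef
  set x : Fin n := emin f with hxdef
  set y : Fin n := emax f with hydef
  have hfxy : f = s(x, y) := eq_mk_minmax f
  have hxyadj : G.Adj x y := G.mem_edgeSet.mp (by rw [← hfxy]; exact hfG)
  have hxylt : x < y := lt_of_le_of_ne (emin_le_emax f) hxyadj.ne
  have hxyne : x ≠ y := hxyadj.ne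
  have hfG' : s(x,y) ∈ G.edgeSet := by rw [← hfxy]; exact hfG
  have hHG : fromEdgeSet (↑T : Set (Sym2 (Fin n))) ≤ G := by
    intro a b hab
    rw [SimpleGraph.fromEdgeSet_adj] at hab
    exact G.mem_edgeSet.mp (hT.1 hab.1)
  by_cases hfT : f ∈ T
  · -- CUT case : f ∈ T, e ∉ T
    have heT : e ∉ T := fun h => (hmemiff.mp h) hfT
    have hfT' : s(x,y) ∈ T := by rw [← hfxy]; exact hfT
    have hspe : IsSpanningTree G (T.erase f ∪ {e}) := by
      rw [← symmDiff_eq_erase_union' T e f heT hfT hef]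
      exact hsp
    set u : Fin n := emin e with hudef
    set w : Fin n := emax e with hwdef
    have he_eq : e = s(u, w) := eq_mk_minmax e
    have huwadj : G.Adj u w := G.mem_edgeSet.mp (by rw [← he_eq]; exact heG)
    have huwlt : u < w := lt_of_le_of_ne (emin_le_emax e) huwadj.ne
    have heG' : s(u,w) ∈ G.edgeSet := by rw [← he_eq]; exact heG
    have heT' : s(u,w) ∉ T := by rw [← he_eq]; exact heT
    have hspe' : IsSpanningTree G (T.erase s(x,y) ∪ {s(u,w)}) := by
      rw [← hfxy, ← he_eq]
      exact hspe
    have hyA : ¬ ((fromEdgeSet (↑T : Set (Sym2 (Fin n))) \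
        SimpleGraph.fromEdgeSet {s(x,y)}).Reachable x y) := not_reach_xy G T hT hfT' hxyne
    rcases eq_or_lt_of_le (Nat.succ_le_of_lt (show x.val < y.val from hxylt)) with hy1 | hy2
    · -- f is an outer edge s(x, x+1)
      -- from key e < key f we get both endpoints of e at most x
      have hyn : y.val < n := y.isLt
      have hwx : w.val ≤ x.val := by
        by_contra hcon
        have hkey_f : key n f = y.val * n + (n - 1 - x.val) := by
          rw [hfxy]; exact key_mk (le_of_lt hxylt)
        have hkey_e : key n e = w.val * n + (n - 1 - u.val) := by
          rw [he_eq]; exact key_mk (le_of_lt huwlt)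
        have hb : n - 1 - x.val < n := by omega
        have : key n f ≤ key n e := by
          rw [hkey_f, hkey_e]
          rcases Nat.lt_or_ge y.val w.val with h | h
          · exact keyblock_le hb (Or.inl h)
          · have hwy : w.val = y.val := by
              have := Fin.lt_def.mp huwlt
              omega
            refine keyblock_le hb (Or.inr ⟨hwy.symm, ?_⟩)
            have := Fin.lt_def.mp huwlt
            omega
        exact absurd hkeyef (not_lt.mpr this)
      have hsides := cut_sides G T hT hfT' hxyne heG' heT' hspe'
      set RA : Fin n → Prop :=
        fun z => (fromEdgeSet (↑T : Set (Sym2 (Fin n))) \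
          SimpleGraph.fromEdgeSet {s(x,y)}).Reachable x z with hRAdef
      have hQ : ∀ (c0 : ℕ), u.val ≤ c0 → c0 < w.val →
          ∀ (hc1 : c0 < n) (hc2 : c0 + 1 < n),
          (RA ⟨c0, hc1⟩ ∧ ¬ RA ⟨c0+1, hc2⟩) ∨ (¬ RA ⟨c0, hc1⟩ ∧ RA ⟨c0+1, hc2⟩) →
          ∃ d : Sym2 (Fin n), ℓ d < ℓ f ∧
            ((∃ v : Fin n, v ∈ d ∧ v ∈ f) ∨ OnCommonFace G d f) ∧
            IsEdgeExchange G T d f := by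
        intro c0 hc0u hc0w hc1 hc2 hor
        have hadjout : G.Adj (⟨c0, hc1⟩ : Fin n) (⟨c0+1, hc2⟩ : Fin n) := by
          apply hout
          exact Nat.mod_eq_of_lt hc2
        have houterd : IsOuterEdge (s((⟨c0, hc1⟩ : Fin n), (⟨c0+1, hc2⟩ : Fin n))) :=
          ⟨⟨c0, hc1⟩, ⟨c0+1, hc2⟩, Nat.mod_eq_of_lt hc2, rfl⟩
        have houterf : IsOuterEdge f := by
          refine ⟨x, y, ?_, hfxy⟩
          rw [Nat.mod_eq_of_lt (by omega)]
          omega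
        have hkeyd : ∀ (a b : Fin n), a.val = c0 → b.val = c0 + 1 →
            key n s(a, b) < key n f := by
          intro a b ha hb
          have h1 : a ≤ b := by rw [Fin.le_def]; omega
          rw [key_mk h1, hfxy, key_mk (le_of_lt hxylt), ha, hb]
          exact keyblock_lt (by omega) (Or.inl (by omega))
        rcases hor with ⟨hA1, hA2⟩ | ⟨hA1, hA2⟩
        · set d : Sym2 (Fin n) := s((⟨c0, hc1⟩ : Fin n), (⟨c0+1, hc2⟩ : Fin n)) with hddef
          have hkd : key n d < key n f := hkeyd _ _ rfl rfl
          have hdne : d ≠ f := fun h => absurd (h ▸ hkd) (lt_irrefl _)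
          obtain ⟨hdT, hdsp⟩ := cut_ex G T hT hfT' hxyne
            (G.mem_edgeSet.mpr hadjout) (fun h => hdne (h.trans hfxy.symm)) hA1 hA2
          refine ⟨d, ?_, Or.inr (Or.inr ⟨houterd, houterf⟩), ?_⟩
          · exact (hiff d f (G.mem_edgeSet.mpr hadjout) hfG).mpr hkd
          · refine ⟨G.mem_edgeSet.mpr hadjout, hfG, hdne,
              iff_of_false hdT (not_not_intro hfT), ?_⟩
            rw [symmDiff_eq_erase_union' T d f hdT hfT hdne, hfxy]
            exact hdsp
        · set d : Sym2 (Fin n) := s((⟨c0+1, hc2⟩ : Fin n), (⟨c0, hc1⟩ : Fin n)) with hddef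
          have hdeq : d = s((⟨c0, hc1⟩ : Fin n), (⟨c0+1, hc2⟩ : Fin n)) := Sym2.eq_swap
          have hkd : key n d < key n f := by rw [hdeq]; exact hkeyd _ _ rfl rfl
          have hdne : d ≠ f := fun h => absurd (h ▸ hkd) (lt_irrefl _)
          obtain ⟨hdT, hdsp⟩ := cut_ex G T hT hfT' hxyne
            (G.mem_edgeSet.mpr hadjout.symm) (fun h => hdne (h.trans hfxy.symm)) hA2 hA1
          refine ⟨d, ?_, Or.inr (Or.inr ⟨hdeq ▸ houterd, houterf⟩), ?_⟩
          · exact (hiff d f (G.mem_edgeSet.mpr hadjout.symm) hfG).mpr hkd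
          · refine ⟨G.mem_edgeSet.mpr hadjout.symm, hfG, hdne,
              iff_of_false hdT (not_not_intro hfT), ?_⟩
            rw [symmDiff_eq_erase_union' T d f hdT hfT hdne, hfxy]
            exact hdsp
      -- locate the switch
      have hxA : RA x := Reachable.refl x
      by_cases hu : RA u
      · have hw : ¬ RA w := (hsides.mp hu)
        obtain ⟨c0, hc0u, hc0w, hQc, hQc'⟩ := nat_ivt (Q := fun c =>
            ∃ hc : c < n, RA ⟨c, hc⟩) (a := u.val) (b := w.val)
          (le_of_lt (Fin.lt_def.mp huwlt)) ⟨u.isLt, by rwa [Fin.eta]⟩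
          (by rintro ⟨hc, hcon⟩; rw [Fin.eta] at hcon; exact hw hcon)
        have hc1 : c0 < n := by have := w.isLt; omega
        have hc2 : c0 + 1 < n := by have := x.isLt; omega
        obtain ⟨hc1', hQc⟩ := hQc
        refine hQ c0 hc0u hc0w hc1 hc2 (Or.inl ⟨hQc, fun hcon => hQc' ⟨hc2, hcon⟩⟩)
      · have hw : RA w := by
          by_contra hwcon
          exact hu (hsides.mpr hwcon)
        obtain ⟨c0, hc0u, hc0w, hQc, hQc'⟩ := nat_ivt (Q := fun c =>
            ¬ ∃ hc : c < n, RA ⟨c, hc⟩) (a := u.val) (b := w.val)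
          (le_of_lt (Fin.lt_def.mp huwlt))
          (by rintro ⟨hc, hcon⟩; rw [Fin.eta] at hcon; exact hu hcon)
          (not_not_intro ⟨w.isLt, by rwa [Fin.eta]⟩)
        have hc1 : c0 < n := by have := w.isLt; omega
        have hc2 : c0 + 1 < n := by have := x.isLt; omega
        have hQc2 : RA ⟨c0+1, hc2⟩ := by
          rcases not_not.mp hQc' with ⟨hcc, hcon⟩
          exact hcon
        refine hQ c0 hc0u hc0w hc1 hc2 (Or.inr ⟨fun hcon => hQc ⟨hc1, hcon⟩, hQc2⟩)
    · -- f is a chord (or the edge s(0, n-1)) : use the inner face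
      obtain ⟨c, c', l, hcA, hc'A, hccadj, hface, hbd_d, hbd_f, hkeylt⟩ :=
        face_main hout hy2 hxyadj
          {z | (fromEdgeSet (↑T : Set (Sym2 (Fin n))) \
            SimpleGraph.fromEdgeSet {s(x,y)}).Reachable x z}
          (Reachable.refl x) hyA
      have hdG : s(c,c') ∈ G.edgeSet := G.mem_edgeSet.mpr hccadj
      have hkd : key n s(c,c') < key n f := by rw [hfxy]; exact hkeylt
      have hdne : s(c,c') ≠ f := fun h => absurd (h ▸ hkd) (lt_irrefl _)
      obtain ⟨hdT, hdsp⟩ := cut_ex G T hT hfT' hxyne hdG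
        (fun h => hdne (h.trans hfxy.symm)) hcA hc'A
      refine ⟨s(c,c'), (hiff _ f hdG hfG).mpr hkd,
        Or.inr (Or.inl ⟨l, hface, hbd_d, by rw [hfxy]; exact hbd_f⟩), ?_⟩
      refine ⟨hdG, hfG, hdne, iff_of_false hdT (not_not_intro hfT), ?_⟩
      rw [symmDiff_eq_erase_union' T s(c,c') f hdT hfT hdne, hfxy]
      exact hdsp
  · -- CYCLE case : f ∉ T, e ∈ T
    have heT : e ∈ T := hmemiff.mpr hfT
    have hfT' : s(x,y) ∉ T := by rw [← hfxy]; exact hfT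
    have hspe : IsSpanningTree G (T.erase e ∪ {s(x,y)}) := by
      rw [← hfxy, ← symmDiff_eq_erase_union T e f heT hfT hef]
      exact hsp
    obtain ⟨W0⟩ := hT.2.1.preconnected x y
    obtain ⟨W, hWp⟩ := W0.toPath
    obtain ⟨p, hadj, P', hWeq⟩ := SimpleGraph.Walk.exists_eq_cons_of_ne hxyne W
    rw [hWeq] at hWp
    have hdT : s(x,p) ∈ T := by
      have := hadj
      rw [SimpleGraph.fromEdgeSet_adj] at this
      exact Finset.mem_coe.mp this.1
    have hdG : s(x,p) ∈ G.edgeSet := hT.1 hdT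
    have hP'path : P'.IsPath := hWp.of_cons
    have hP'nodup : P'.support.Nodup := (SimpleGraph.Walk.isPath_def P').mp hP'path
    have hxns : x ∉ P'.support := ((SimpleGraph.Walk.cons_isPath_iff hadj P').mp hWp).2
    by_cases hgood : key n s(x,p) < key n f
    · refine ⟨s(x,p), (hiff _ f hdG hfG).mpr hgood, Or.inl ⟨x, ?_, ?_⟩, ?_⟩
      · exact Sym2.mem_iff.mpr (Or.inl rfl)
      · rw [hfxy]; exact Sym2.mem_iff.mpr (Or.inl rfl)
      have hdne : s(x,p) ≠ f := fun h => absurd (h ▸ hgood) (lt_irrefl _)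
      refine ⟨hdG, hfG, hdne, iff_of_true hdT hfT, ?_⟩
      rw [symmDiff_eq_erase_union T s(x,p) f hdT hfT hdne, hfxy]
      exact cyc_ex G T hT hfG' hfT' hadj P' hWp
    · exfalso
      have he_in : e ∈ (SimpleGraph.Walk.cons hadj P').edges :=
        mem_path_edges G T hT hfG' hfT' heT hspe (SimpleGraph.Walk.cons hadj P')
      have hpx : p ≠ x := hadj.ne'
      have hpy : p ≠ y := by
        intro h
        rw [h] at hdT
        exact hfT' hdT
      have hkey_f : key n f = y.val * n + (n - 1 - x.val) := by
        rw [hfxy]; exact key_mk (le_of_lt hxylt)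
      have hb : n - 1 - x.val < n := by have := x.isLt; omega
      have hyp : y < p := by
        rcases lt_trichotomy p y with h | h | h
        · exfalso
          apply hgood
          rcases lt_trichotomy p x with h2 | h2 | h2
          · have : key n s(x,p) = x.val * n + (n - 1 - p.val) := by
              rw [Sym2.eq_swap]; exact key_mk (le_of_lt h2)
            rw [this, hkey_f]
            exact keyblock_lt (by have := p.isLt; omega) (Or.inl (Fin.lt_def.mp hxylt))
          · exact absurd h2 hpx
          · have : key n s(x,p) = p.val * n + (n - 1 - x.val) := key_mk (le_of_lt h2)
            rw [this, hkey_f]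
            exact keyblock_lt hb (Or.inl (Fin.lt_def.mp h))
        · exact absurd h hpy
        · exact h
      have hxp : x < p := lt_trans hxylt hyp
      have hstruct : ∀ z ∈ P'.support, z ≠ y → y < z := by
        intro z hz hzy
        have hzx : z ≠ x := fun h => hxns (h ▸ hz)
        rcases lt_trichotomy z x with h | h | h
        · exfalso
          have hzp : z ≠ p := ne_of_lt (lt_trans h hxp)
          have hsupW2 : ∀ z' ∈ (P'.dropUntil z hz).support, z' ≠ x ∧ z' ≠ p := by
            intro z' hz'
            constructor
            · exact fun hh => hxns (hh ▸ (SimpleGraph.Walk.support_dropUntil_subset P' hz) hz')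
            · intro hh
              exact (not_start_mem_dropUntil hP'nodup hz hzp) (hh ▸ hz')
          exact no_enter hnc hHG hxp hdG (P'.dropUntil z hz) hsupW2 (Or.inl h)
            ⟨hxylt, hyp⟩
        · exact absurd h hzx
        · rcases lt_trichotomy z y with h2 | h2 | h2
          · exfalso
            have hsupW1 : ∀ z' ∈ (P'.takeUntil z hz).support, z' ≠ x ∧ z' ≠ y := by
              intro z' hz'
              constructor
              · exact fun hh => hxns (hh ▸ (SimpleGraph.Walk.support_takeUntil_subset P' hz) hz')
              · intro hh
                exact (not_end_mem_takeUntil hP'nodup hz hzy) (hh ▸ hz')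
            exact no_enter hnc hHG hxylt hfG' (P'.takeUntil z hz) hsupW1 (Or.inr hyp)
              ⟨h, h2⟩
          · exact absurd h2 hzy
          · exact h2
      -- every edge of the path has key at least key f
      set u0 : Fin n := emin e with hu0def
      set w0 : Fin n := emax e with hw0def
      have he_eq : e = s(u0, w0) := eq_mk_minmax e
      have hu0w0 : u0 < w0 :=
        lt_of_le_of_ne (emin_le_emax e) (G.mem_edgeSet.mp (by rw [← he_eq]; exact heG)).ne
      rw [he_eq] at he_in
      have hu0s : u0 ∈ (SimpleGraph.Walk.cons hadj P').support :=
        SimpleGraph.Walk.fst_mem_support_of_mem_edges _ he_in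
      have hw0s : w0 ∈ (SimpleGraph.Walk.cons hadj P').support :=
        SimpleGraph.Walk.snd_mem_support_of_mem_edges _ he_in
      rw [SimpleGraph.Walk.support_cons, List.mem_cons] at hu0s hw0s
      have hkey_e : key n e = w0.val * n + (n - 1 - u0.val) := by
        rw [he_eq]; exact key_mk (le_of_lt hu0w0)
      have hw0y : y < w0 := by
        rcases hw0s with h | h
        · -- w0 = x : impossible since u0 < w0 and u0 is also ≥ x or equal
          exfalso
          rcases hu0s with h2 | h2
          · rw [h2] at hu0w0
            rw [h] at hu0w0
            exact lt_irrefl x hu0w0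
          · have := hstruct u0 h2
            by_cases hu0y : u0 = y
            · rw [hu0y, h] at hu0w0
              exact absurd hu0w0 (lt_asymm hxylt)
            · have h3 := this hu0y
              rw [h] at hu0w0
              exact absurd (lt_trans h3 hu0w0) (lt_asymm hxylt)
        · by_cases hw0y : w0 = y
          · -- then u0 must be x (giving e = f) or > y, contradicting u0 < w0 = y
            exfalso
            rcases hu0s with h2 | h2
            · apply hef
              rw [he_eq, hfxy, h2, hw0y]
            · by_cases hu0y : u0 = y
              · rw [hu0y, hw0y] at hu0w0
                exact lt_irrefl y hu0w0
              · have h3 := hstruct u0 h2 hu0y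
                rw [hw0y] at hu0w0
                exact absurd hu0w0 (lt_asymm h3)
          · exact hstruct w0 h hw0y
      have : key n f < key n e := by
        rw [hkey_e, hkey_f]
        exact keyblock_lt hb (Or.inl (Fin.lt_def.mp hw0y))
      exact absurd hkeyef (lt_asymm this)
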